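/- Let c : ℤ → ℂ be periodic with minimum period n and let m ≥ 0 be an integer. Then the rational function r(x) = ∑_{k≥0} c(k) k^m x^k has poles only at n-th roots of unity, and every pole of r has order exactly m+1. -/

import Mathlib

open PowerSeries Polynomial

open Finset

lemma alt_pascal (N : ℕ) (F : ℕ → ℂ) :
    ∑ i ∈ range (N+2), (-1:ℂ)^i * ((N+1).choose i) * F i
      = ∑ i ∈ range (N+1), (-1:ℂ)^i * (N.choose i) * (F i - F (i+1)) := by
  have h1 : ∑ i ∈ range (N+2), (-1:ℂ)^i * ((N+1).choose i) * F i
      = (∑ i ∈ range (N+1), (-1:ℂ)^(i+1) * ((N+1).choose (i+1)) * F (i+1)) + F 0 := by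
    rw [Finset.sum_range_succ' (fun i => (-1:ℂ)^i * ((N+1).choose i) * F i) (N+1)]
    simp
  have h2 : ∀ i, ((N+1).choose (i+1) : ℂ) = (N.choose i : ℂ) + (N.choose (i+1) : ℂ) := by
    intro i; rw [Nat.choose_succ_succ]; push_cast; ring
  have h3 : (∑ i ∈ range (N+1), (-1:ℂ)^(i+1) * (N.choose (i+1)) * F (i+1)) + F 0
      = ∑ i ∈ range (N+1), (-1:ℂ)^i * (N.choose i) * F i := by
    have e1 := Finset.sum_range_succ' (fun i => (-1:ℂ)^i * (N.choose i) * F i) (N+1)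
    have e2 : ∑ i ∈ range (N+2), (-1:ℂ)^i * (N.choose i) * F i
        = ∑ i ∈ range (N+1), (-1:ℂ)^i * (N.choose i) * F i := by
      rw [Finset.sum_range_succ, Nat.choose_succ_self]; simp
    simp only [pow_zero, Nat.choose_zero_right, Nat.cast_one, one_mul] at e1
    rw [← e2, e1]
  calc ∑ i ∈ range (N+2), (-1:ℂ)^i * ((N+1).choose i) * F i
      = (∑ i ∈ range (N+1), ((-1:ℂ)^(i+1) * (N.choose i) * F (i+1)
          + (-1:ℂ)^(i+1) * (N.choose (i+1)) * F (i+1))) + F 0 := by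
        rw [h1]; congr 1; apply Finset.sum_congr rfl; intro i _; rw [h2]; ring
    _ = (∑ i ∈ range (N+1), (-1:ℂ)^(i+1) * (N.choose i) * F (i+1))
          + ((∑ i ∈ range (N+1), (-1:ℂ)^(i+1) * (N.choose (i+1)) * F (i+1)) + F 0) := by
        rw [Finset.sum_add_distrib]; ring
    _ = (∑ i ∈ range (N+1), (-1:ℂ)^(i+1) * (N.choose i) * F (i+1))
          + ∑ i ∈ range (N+1), (-1:ℂ)^i * (N.choose i) * F i := by rw [h3]
    _ = ∑ i ∈ range (N+1), (-1:ℂ)^i * (N.choose i) * (F i - F (i+1)) := by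
        rw [← Finset.sum_add_distrib]; apply Finset.sum_congr rfl; intro i _; ring



-- degree drop lemma
lemma deg_drop (p : Polynomial ℂ) (N : ℕ) (hp : p.degree < N + 1) :
    (p - p.comp (Polynomial.X - Polynomial.C 1)).degree < N := by
  by_cases h0 : p.natDegree = 0
  · obtain ⟨a, rfl⟩ := Polynomial.natDegree_eq_zero.mp h0
    simp only [C_comp, sub_self, degree_zero]
    exact WithBot.bot_lt_coe N
  · have hpne : p ≠ 0 := fun h => h0 (by simp [h])
    have hlc : p.leadingCoeff = (p.comp (Polynomial.X - Polynomial.C 1)).leadingCoeff := by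
      rw [Polynomial.leadingCoeff_comp (by rw [natDegree_X_sub_C]; exact one_ne_zero),
        leadingCoeff_X_sub_C, one_pow, mul_one]
    have hcne : p.comp (Polynomial.X - Polynomial.C 1) ≠ 0 := by
      intro h
      apply hpne
      rw [← Polynomial.leadingCoeff_eq_zero, hlc, h, Polynomial.leadingCoeff_zero]
    have hdeg : (p.comp (Polynomial.X - Polynomial.C 1)).degree = p.degree := by
      rw [Polynomial.degree_eq_natDegree hcne, Polynomial.degree_eq_natDegree hpne,
        Polynomial.natDegree_comp, natDegree_X_sub_C, mul_one]
    have hlt := Polynomial.degree_sub_lt hdeg.symm hpne hlc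
    calc (p - p.comp (Polynomial.X - Polynomial.C 1)).degree < p.degree := hlt
      _ ≤ N := by
        have hd : p.degree ≤ p.natDegree := Polynomial.degree_le_natDegree
        have h2 : p.natDegree < N + 1 := by
          have := Polynomial.natDegree_lt_iff_degree_lt (n := N+1) hpne |>.mpr (by exact_mod_cast hp)
          exact_mod_cast this
        exact le_trans hd (by exact_mod_cast Nat.lt_succ_iff.mp h2)

lemma findiff_zero : ∀ (N : ℕ) (p : Polynomial ℂ), p.degree < N → ∀ z : ℂ,
    ∑ i ∈ range (N+1), (-1:ℂ)^i * (N.choose i) * p.eval (z - i) = 0 := by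
  intro N
  induction N with
  | zero =>
    intro p hp z
    have : p = 0 := by
      rw [← Polynomial.degree_eq_bot]
      exact Nat.WithBot.lt_zero_iff.mp (by exact_mod_cast hp)
    simp [this]
  | succ N ih =>
    intro p hp z
    rw [alt_pascal N (fun i => p.eval (z - i))]
    have key : ∀ i : ℕ, p.eval (z - i) - p.eval (z - (i+1 : ℕ))
        = (p - p.comp (Polynomial.X - Polynomial.C 1)).eval (z - i) := by
      intro i
      simp only [Polynomial.eval_sub, Polynomial.eval_comp, Polynomial.eval_X, Polynomial.eval_C]
      push_cast
      ring_nf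
    calc ∑ i ∈ range (N+1), (-1:ℂ)^i * (N.choose i) * (p.eval (z-i) - p.eval (z-(i+1:ℕ)))
        = ∑ i ∈ range (N+1), (-1:ℂ)^i * (N.choose i) * (p - p.comp (Polynomial.X - Polynomial.C 1)).eval (z - i) := by
          apply Finset.sum_congr rfl; intro i _; rw [key]
      _ = 0 := ih _ (deg_drop p N hp) z




lemma findiff_fact : ∀ (N : ℕ) (z : ℂ),
    ∑ i ∈ range (N+1), (-1:ℂ)^i * (N.choose i) * (z - i)^N = (N.factorial : ℂ) := by
  intro N
  induction N with
  | zero => intro z; simp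
  | succ N ih =>
    intro z
    have hr : ((Polynomial.X : Polynomial ℂ)^(N+1) - (Polynomial.X - Polynomial.C 1)^(N+1) - ((N:ℂ)+1) • Polynomial.X^N).degree < (N : WithBot ℕ) := by
      rw [Polynomial.degree_lt_iff_coeff_zero]
      intro j hj
      have hj' : N ≤ j := by exact_mod_cast hj
      have hc : ((Polynomial.X - Polynomial.C 1 : Polynomial ℂ)^(N+1)).coeff j = (-1:ℂ)^(N+1-j) * ((N+1).choose j) := by
        have : (Polynomial.X - Polynomial.C (1:ℂ)) = Polynomial.X + Polynomial.C (-1) := by rw [map_neg, ← sub_eq_add_neg]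
        rw [this, Polynomial.coeff_X_add_C_pow]
      simp only [Polynomial.coeff_sub, Polynomial.coeff_smul, Polynomial.coeff_X_pow, hc]
      rcases eq_or_lt_of_le hj' with h | h
      · -- j = N
        subst h
        simp only [if_neg (by omega : ¬ N + 1 = N), if_pos rfl]
        have : N + 1 - N = 1 := by omega
        rw [this]
        simp [Nat.choose_succ_self_right]
      · rcases eq_or_lt_of_le (by omega : N + 1 ≤ j) with h2 | h2
        · subst h2
          simp [Nat.sub_self]
        · rw [if_neg (by omega), if_neg (by omega), Nat.choose_eq_zero_of_lt h2]
          simp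
    have key : ∀ i : ℕ, (z - i)^(N+1) - (z - (i+1:ℕ))^(N+1)
        = ((N:ℂ)+1) * (z - i)^N
          + ((Polynomial.X : Polynomial ℂ)^(N+1) - (Polynomial.X - Polynomial.C 1)^(N+1) - ((N:ℂ)+1) • Polynomial.X^N).eval (z - i) := by
      intro i
      simp only [Polynomial.eval_sub, Polynomial.eval_smul, Polynomial.eval_pow,
        Polynomial.eval_X, Polynomial.eval_C, smul_eq_mul]
      push_cast
      ring
    rw [alt_pascal N (fun i => (z - i)^(N+1))]
    calc ∑ i ∈ range (N+1), (-1:ℂ)^i * (N.choose i) * ((z-i)^(N+1) - (z-(i+1:ℕ))^(N+1))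
        = (((N:ℂ)+1) * ∑ i ∈ range (N+1), (-1:ℂ)^i * (N.choose i) * (z - i)^N)
          + ∑ i ∈ range (N+1), (-1:ℂ)^i * (N.choose i)
              * ((Polynomial.X : Polynomial ℂ)^(N+1) - (Polynomial.X - Polynomial.C 1)^(N+1) - ((N:ℂ)+1) • Polynomial.X^N).eval (z - i) := by
          rw [Finset.mul_sum, ← Finset.sum_add_distrib]
          apply Finset.sum_congr rfl; intro i _
          rw [key]; ring
      _ = ((N:ℂ)+1) * (N.factorial : ℂ) + 0 := by rw [ih z, findiff_zero N _ hr z]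
      _ = ((N+1).factorial : ℂ) := by rw [Nat.factorial_succ]; push_cast; ring



noncomputable def eK (m K : ℕ) : ℂ :=
  ∑ i ∈ range (K+1), (-1:ℂ)^i * ((m+1).choose i) * ((K:ℂ) - i)^m

lemma partial_alt_sum (m : ℕ) : ∀ S : ℕ,
    ∑ s ∈ range (S+1), (-1:ℂ)^s * ((m+1).choose s) = (-1:ℂ)^S * (m.choose S) := by
  intro S
  induction S with
  | zero => simp
  | succ S ih =>
    rw [Finset.sum_range_succ, ih, Nat.choose_succ_succ m S]
    push_cast
    ring

lemma V_eq (m : ℕ) : ∑ K ∈ range (m+1), eK m K = (m.factorial : ℂ) := by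
  have step1 : ∀ K, eK m K
      = ∑ t ∈ range (K+1), ((t:ℂ))^m * ((-1:ℂ)^(K-t) * ((m+1).choose (K-t))) := by
    intro K
    rw [eK, ← Finset.sum_range_reflect]
    apply Finset.sum_congr rfl
    intro t ht
    simp only [Finset.mem_range] at ht
    have h1 : K + 1 - 1 - t = K - t := by omega
    rw [h1]
    have h2 : ((K:ℂ) - ((K - t : ℕ) : ℂ)) = (t:ℂ) := by
      have : (((K - t : ℕ)) : ℂ) = (K:ℂ) - t := by
        push_cast [Nat.cast_sub (by omega : t ≤ K)]; ring
      rw [this]; ring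
    rw [h2]; ring
  calc ∑ K ∈ range (m+1), eK m K
      = ∑ K ∈ range (m+1), ∑ t ∈ range (K+1), ((t:ℂ))^m * ((-1:ℂ)^(K-t) * ((m+1).choose (K-t))) := by
        exact Finset.sum_congr rfl fun K _ => step1 K
    _ = ∑ t ∈ range (m+1), ∑ K ∈ Finset.Ico t (m+1), ((t:ℂ))^m * ((-1:ℂ)^(K-t) * ((m+1).choose (K-t))) := by
        simp only [Finset.range_eq_Ico]
        rw [← Finset.sum_Ico_Ico_comm]
    _ = ∑ t ∈ range (m+1), ((t:ℂ))^m * ((-1:ℂ)^(m-t) * (m.choose (m-t))) := by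
        apply Finset.sum_congr rfl
        intro t ht
        simp only [Finset.mem_range] at ht
        rw [Finset.sum_Ico_eq_sum_range]
        simp only [Nat.add_sub_cancel_left]
        have hS : m + 1 - t = (m - t) + 1 := by omega
        rw [hS, ← Finset.mul_sum, ← partial_alt_sum m (m - t)]
    _ = ∑ i ∈ range (m+1), (-1:ℂ)^i * (m.choose i) * (((m:ℂ)) - i)^m := by
        rw [← Finset.sum_range_reflect (fun i => (-1:ℂ)^i * (m.choose i) * (((m:ℂ)) - i)^m) (m+1)]
        apply Finset.sum_congr rfl
        intro t ht
        simp only [Finset.mem_range] at ht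
        have h1 : m + 1 - 1 - t = m - t := by omega
        rw [h1]
        have h2 : ((m:ℂ) - ((m - t : ℕ) : ℂ)) = (t:ℂ) := by
          push_cast [Nat.cast_sub (by omega : t ≤ m)]; ring
        rw [h2]; ring
    _ = (m.factorial : ℂ) := findiff_fact m (m:ℂ)



noncomputable def Epoly (m : ℕ) (u : ℂ) : Polynomial ℂ :=
  ∑ K ∈ range (m+1), Polynomial.C (u^K * eK m K) * Polynomial.X^K

lemma coeff_one_sub_pow (u : ℂ) (M i : ℕ) :
    ((1 - Polynomial.C u * Polynomial.X)^M : Polynomial ℂ).coeff i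
      = (-u)^i * (M.choose i) := by
  have h : (1 - Polynomial.C u * Polynomial.X : Polynomial ℂ)
      = Polynomial.C (-u) * Polynomial.X + 1 := by
    rw [map_neg]; ring
  rw [h, add_pow]
  simp only [one_pow, mul_one, mul_pow, ← Polynomial.C_pow]
  rw [Polynomial.finset_sum_coeff]
  have hterm : ∀ k ∈ range (M+1),
      (Polynomial.C ((-u)^k) * Polynomial.X^k * ((M.choose k : ℕ) : Polynomial ℂ)).coeff i
        = if i = k then (-u)^k * (M.choose k) else 0 := by
    intro k _
    rw [← Polynomial.C_eq_natCast, Polynomial.coeff_mul_C, Polynomial.coeff_C_mul,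
      Polynomial.coeff_X_pow]
    split_ifs <;> simp
  rw [Finset.sum_congr rfl hterm, Finset.sum_ite_eq (range (M+1)) i
    (fun k => (-u)^k * ((M.choose k : ℕ) : ℂ))]
  simp only [Finset.mem_range]
  split_ifs with hi
  · rfl
  · rw [Nat.choose_eq_zero_of_lt (by omega)]
    simp

lemma Epoly_coeff (m : ℕ) (u : ℂ) (K : ℕ) :
    (Epoly m u).coeff K = if K < m + 1 then u^K * eK m K else 0 := by
  rw [Epoly, Polynomial.finset_sum_coeff]
  simp only [Polynomial.coeff_C_mul, Polynomial.coeff_X_pow, mul_ite, mul_one, mul_zero]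
  rw [Finset.sum_ite_eq (range (m+1)) K (fun b => u^b * eK m b)]
  simp [Finset.mem_range]

lemma lemB (m : ℕ) (u : ℂ) :
    (((1 - Polynomial.C u * Polynomial.X)^(m+1) : Polynomial ℂ) : PowerSeries ℂ)
        * PowerSeries.mk (fun k => (k:ℂ)^m * u^k)
      = ((Epoly m u : Polynomial ℂ) : PowerSeries ℂ) := by
  ext K
  rw [PowerSeries.coeff_mul, Finset.Nat.sum_antidiagonal_eq_sum_range_succ_mk]
  simp only [Polynomial.coeff_coe, coeff_one_sub_pow, PowerSeries.coeff_mk, Epoly_coeff]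
  have hlhs : ∑ i ∈ range (K+1), (-u)^i * (((m+1).choose i : ℕ) : ℂ) * (((K - i : ℕ) : ℂ)^m * u^(K-i))
      = u^K * ∑ i ∈ range (K+1), (-1:ℂ)^i * (((m+1).choose i : ℕ) : ℂ) * ((K:ℂ) - i)^m := by
    rw [Finset.mul_sum]
    apply Finset.sum_congr rfl
    intro i hi
    simp only [Finset.mem_range] at hi
    have h1 : (((K - i : ℕ)) : ℂ) = (K:ℂ) - i := by
      push_cast [Nat.cast_sub (by omega : i ≤ K)]; ring
    have h2 : (-u)^i = (-1:ℂ)^i * u^i := by rw [neg_pow]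
    have h3 : u^i * u^(K-i) = u^K := by rw [← pow_add]; congr 1; omega
    rw [h1, h2]
    calc (-1:ℂ)^i * u^i * (((m+1).choose i : ℕ) : ℂ) * (((K:ℂ) - i)^m * u^(K-i))
        = ((-1:ℂ)^i * (((m+1).choose i : ℕ) : ℂ) * ((K:ℂ) - i)^m) * (u^i * u^(K-i)) := by ring
      _ = u^K * ((-1:ℂ)^i * (((m+1).choose i : ℕ) : ℂ) * ((K:ℂ) - i)^m) := by rw [h3]; ring
  rw [hlhs]
  by_cases hK : K < m + 1
  · rw [if_pos hK]
    rw [eK]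
  · rw [if_neg hK]
    have hshrink : ∑ i ∈ range (K+1), (-1:ℂ)^i * (((m+1).choose i : ℕ) : ℂ) * ((K:ℂ) - i)^m
        = ∑ i ∈ range (m+2), (-1:ℂ)^i * (((m+1).choose i : ℕ) : ℂ) * ((K:ℂ) - i)^m := by
      symm
      apply Finset.sum_subset
      · intro x hx; simp only [Finset.mem_range] at *; omega
      · intro x _ hx
        simp only [Finset.mem_range, not_lt] at hx
        rw [Nat.choose_eq_zero_of_lt (by omega)]
        simp
    have hz : ∑ i ∈ range (m+2), (-1:ℂ)^i * (((m+1).choose i : ℕ) : ℂ) * ((K:ℂ) - i)^m = 0 := by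
      have := findiff_zero (m+1) (Polynomial.X^m) (by
        rw [Polynomial.degree_X_pow]; exact_mod_cast Nat.lt_succ_self m) (K:ℂ)
      simpa using this
    rw [hshrink, hz, mul_zero]


lemma periodic_mod (c : ℤ → ℂ) (n : ℕ) (hn : 0 < n) (hper : ∀ k : ℤ, c (k + n) = c k)
    (k : ℕ) : c ((k % n : ℕ) : ℤ) = c (k : ℤ) := by
  have hstep : ∀ (t : ℕ) (x : ℤ), c (x + n * t) = c x := by
    intro t
    induction t with
    | zero => intro x; simp
    | succ t ih =>
      intro x
      have h2 : (x : ℤ) + n * ((t+1 : ℕ) : ℤ) = (x + n) + n * t := by push_cast; ring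
      rw [h2, ih, hper]
  have hk : (k : ℤ) = ((k % n : ℕ) : ℤ) + n * (k / n : ℕ) := by
    have := Nat.mod_add_div k n
    exact_mod_cast this.symm
  rw [hk, hstep]

lemma geom_root_sum (n : ℕ) (hn : 0 < n) (w : ℂ) (hw : w ^ n = 1) :
    ∑ j ∈ range n, w ^ j = if w = 1 then (n : ℂ) else 0 := by
  split_ifs with h
  · simp [h]
  · rw [geom_sum_eq h, hw]
    simp

lemma pow_mod_eq (ζ : ℂ) (n : ℕ) (hζn : ζ ^ n = 1) (k : ℕ) : ζ ^ k = ζ ^ (k % n) := by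
  conv_lhs => rw [← Nat.mod_add_div k n, pow_add, pow_mul, hζn, one_pow, mul_one]

lemma fourier_inv (c : ℤ → ℂ) (n : ℕ) (hn : 0 < n) (hper : ∀ k : ℤ, c (k + n) = c k)
    (ζ : ℂ) (hζ : IsPrimitiveRoot ζ n) (k : ℕ) :
    ∑ j ∈ range n, ((n:ℂ)⁻¹ * ∑ k' ∈ range n, c (k' : ℤ) * ((ζ^j)⁻¹)^k') * (ζ^j)^k
      = c (k : ℤ) := by
  have hζn : ζ ^ n = 1 := hζ.pow_eq_one
  have hζne : ζ ≠ 0 := by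
    intro h
    rw [h, zero_pow (by omega)] at hζn
    exact zero_ne_one hζn
  have hwn : ∀ k' : ℕ, (ζ^k * (ζ^k')⁻¹) ^ n = 1 := by
    intro k'
    rw [mul_pow, inv_pow, ← pow_mul, ← pow_mul, mul_comm k n, mul_comm k' n,
      pow_mul, pow_mul, hζn, one_pow, one_pow]
    simp
  calc ∑ j ∈ range n, ((n:ℂ)⁻¹ * ∑ k' ∈ range n, c (k' : ℤ) * ((ζ^j)⁻¹)^k') * (ζ^j)^k
      = (n:ℂ)⁻¹ * ∑ j ∈ range n, ∑ k' ∈ range n, c (k' : ℤ) * (ζ^k * (ζ^k')⁻¹)^j := by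
        rw [Finset.mul_sum]
        apply Finset.sum_congr rfl
        intro j _
        rw [mul_assoc, Finset.sum_mul]
        congr 1
        apply Finset.sum_congr rfl
        intro k' _
        have he : ((ζ^j)⁻¹)^k' * (ζ^j)^k = (ζ^k * (ζ^k')⁻¹)^j := by
          rw [mul_pow, inv_pow, inv_pow, ← pow_mul, ← pow_mul, ← pow_mul, ← pow_mul,
            mul_comm j k', mul_comm j k]
          ring
        rw [mul_assoc, he]
    _ = (n:ℂ)⁻¹ * ∑ k' ∈ range n, c (k' : ℤ) * ∑ j ∈ range n, (ζ^k * (ζ^k')⁻¹)^j := by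
        rw [Finset.sum_comm]
        congr 1
        apply Finset.sum_congr rfl
        intro k' _
        rw [Finset.mul_sum]
    _ = (n:ℂ)⁻¹ * ∑ k' ∈ range n, c (k' : ℤ) * (if ζ^k = ζ^k' then (n:ℂ) else 0) := by
        congr 1
        apply Finset.sum_congr rfl
        intro k' _
        rw [geom_root_sum n hn _ (hwn k')]
        simp only [mul_inv_eq_one₀ (pow_ne_zero _ hζne)]
    _ = (n:ℂ)⁻¹ * (c ((k % n : ℕ) : ℤ) * n) := by
        congr 1
        rw [Finset.sum_eq_single (k % n)]
        · rw [if_pos (pow_mod_eq ζ n hζn k)]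
        · intro b hb hbne
          rw [if_neg, mul_zero]
          intro hctr
          apply hbne
          have h1 : ζ ^ (k % n) = ζ ^ b := by rw [← pow_mod_eq ζ n hζn k]; exact hctr
          exact (hζ.pow_inj (Nat.mod_lt k hn) (Finset.mem_range.mp hb) h1).symm
        · intro hctr
          exact absurd (Finset.mem_range.mpr (Nat.mod_lt k hn)) hctr
    _ = c ((k % n : ℕ) : ℤ) := by
        have hnne : (n:ℂ) ≠ 0 := Nat.cast_ne_zero.mpr (by omega)
        field_simp
    _ = c (k : ℤ) := periodic_mod c n hn hper k





-- eval of Epoly at reciprocal point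
lemma Epoly_eval (m : ℕ) (u ω : ℂ) (h : u * ω = 1) :
    (Epoly m u).eval ω = (m.factorial : ℂ) := by
  rw [Epoly, Polynomial.eval_finset_sum]
  simp only [Polynomial.eval_mul, Polynomial.eval_C, Polynomial.eval_pow, Polynomial.eval_X]
  rw [← V_eq m]
  apply Finset.sum_congr rfl
  intro K _
  rw [mul_comm (u^K) (eK m K), mul_assoc, ← mul_pow, h, one_pow, mul_one]

/-- If `c : ℤ → ℂ` is periodic with minimum period `n` (and not
identically zero) and `m ≥ 0`, then `r(x) = ∑_{k≥0} c(k) k^m x^k` is a rational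
function whose poles are all n-th roots of unity, each of order exactly `m+1`. -/
theorem poles_of_periodic_times_monomial (c : ℤ → ℂ) (n m : ℕ) (hn : 0 < n)
    (hper : ∀ k : ℤ, c (k + n) = c k)
    (hmin : ∀ p : ℕ, 0 < p → (∀ k : ℤ, c (k + p) = c k) → n ≤ p)
    (hne : ∃ k : ℤ, c k ≠ 0) :
    ∃ num den : Polynomial ℂ, IsCoprime num den ∧ den ≠ 0 ∧
      (den : PowerSeries ℂ) * PowerSeries.mk (fun k : ℕ => c k * (k : ℂ) ^ m) =
        (num : PowerSeries ℂ) ∧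
      ∀ ω : ℂ, den.IsRoot ω → ω ^ n = 1 ∧ den.rootMultiplicity ω = m + 1 := by
  classical
  set ζ : ℂ := Complex.exp (2 * Real.pi * Complex.I / n) with hζdef
  have hζ : IsPrimitiveRoot ζ n := Complex.isPrimitiveRoot_exp n hn.ne'
  have hζn : ζ ^ n = 1 := hζ.pow_eq_one
  have hζne : ζ ≠ 0 := fun h => by
    rw [h, zero_pow hn.ne'] at hζn; exact zero_ne_one hζn
  set a : ℕ → ℂ := fun j => (n:ℂ)⁻¹ * ∑ k' ∈ range n, c (k' : ℤ) * ((ζ^j)⁻¹)^k' with ha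
  set S : Finset ℕ := (range n).filter (fun j => a j ≠ 0) with hS
  set den : Polynomial ℂ :=
    ∏ j ∈ S, (1 - Polynomial.C (ζ^j) * Polynomial.X)^(m+1) with hden
  set num : Polynomial ℂ :=
    ∑ j ∈ S, Polynomial.C (a j) *
      (Epoly m (ζ^j) * ∏ j' ∈ S.erase j, (1 - Polynomial.C (ζ^j') * Polynomial.X)^(m+1))
    with hnum
  -- factors are nonzero
  have hfacne : ∀ u : ℂ, (1 - Polynomial.C u * Polynomial.X : Polynomial ℂ) ≠ 0 := by
    intro u h
    have := congrArg (fun p => Polynomial.coeff p 0) h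
    simp at this
  have hdenne : den ≠ 0 := by
    rw [hden]
    apply Finset.prod_ne_zero_iff.mpr
    intro j _
    exact pow_ne_zero _ (hfacne (ζ^j))
  -- main identity
  have hmk : PowerSeries.mk (fun k : ℕ => c k * (k : ℂ) ^ m)
      = ∑ j ∈ S, PowerSeries.C (a j) * PowerSeries.mk (fun k => (k:ℂ)^m * (ζ^j)^k) := by
    have hfull : PowerSeries.mk (fun k : ℕ => c k * (k : ℂ) ^ m)
        = ∑ j ∈ range n, PowerSeries.C (a j)
            * PowerSeries.mk (fun k => (k:ℂ)^m * (ζ^j)^k) := by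
      ext K
      rw [map_sum]
      simp only [PowerSeries.coeff_C_mul, PowerSeries.coeff_mk]
      have := fourier_inv c n hn hper ζ hζ K
      calc c (K : ℤ) * (K:ℂ)^m
          = (∑ j ∈ range n, ((n:ℂ)⁻¹ * ∑ k' ∈ range n, c (k' : ℤ) * ((ζ^j)⁻¹)^k')
              * (ζ^j)^K) * (K:ℂ)^m := by rw [this]
        _ = ∑ j ∈ range n, a j * ((K:ℂ)^m * (ζ^j)^K) := by
            rw [Finset.sum_mul]
            apply Finset.sum_congr rfl
            intro j _
            rw [ha]
            ring
    rw [hfull]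
    symm
    apply Finset.sum_subset
    · exact Finset.filter_subset _ _
    · intro j hj hjS
      have : a j = 0 := by
        by_contra hne0
        exact hjS (Finset.mem_filter.mpr ⟨hj, hne0⟩)
      rw [this]
      simp
  have hmain : (den : PowerSeries ℂ) * PowerSeries.mk (fun k : ℕ => c k * (k : ℂ) ^ m)
      = (num : PowerSeries ℂ) := by
    rw [hmk, Finset.mul_sum]
    have hnumcoe : (num : PowerSeries ℂ)
        = ∑ j ∈ S, ((Polynomial.C (a j) *
            (Epoly m (ζ^j) * ∏ j' ∈ S.erase j,
              (1 - Polynomial.C (ζ^j') * Polynomial.X)^(m+1)) : Polynomial ℂ) : PowerSeries ℂ) := by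
      rw [hnum]
      rw [← Polynomial.coeToPowerSeries.ringHom_apply, map_sum]
      apply Finset.sum_congr rfl
      intro j _
      rw [Polynomial.coeToPowerSeries.ringHom_apply]
    rw [hnumcoe]
    apply Finset.sum_congr rfl
    intro j hj
    have hsplit : den = (1 - Polynomial.C (ζ^j) * Polynomial.X)^(m+1)
        * ∏ j' ∈ S.erase j, (1 - Polynomial.C (ζ^j') * Polynomial.X)^(m+1) := by
      rw [hden]
      exact (Finset.mul_prod_erase S
        (fun j => (1 - Polynomial.C (ζ^j) * Polynomial.X)^(m+1)) hj).symm
    calc (den : PowerSeries ℂ) * (PowerSeries.C (a j)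
            * PowerSeries.mk (fun k => (k:ℂ)^m * (ζ^j)^k))
        = PowerSeries.C (a j) *
            (((∏ j' ∈ S.erase j, (1 - Polynomial.C (ζ^j') * Polynomial.X)^(m+1)
                : Polynomial ℂ) : PowerSeries ℂ)
              * ((((1 - Polynomial.C (ζ^j) * Polynomial.X)^(m+1) : Polynomial ℂ) : PowerSeries ℂ)
                * PowerSeries.mk (fun k => (k:ℂ)^m * (ζ^j)^k))) := by
          rw [hsplit, Polynomial.coe_mul]
          ring
      _ = PowerSeries.C (a j) *
            (((∏ j' ∈ S.erase j, (1 - Polynomial.C (ζ^j') * Polynomial.X)^(m+1)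
                : Polynomial ℂ) : PowerSeries ℂ)
              * ((Epoly m (ζ^j) : Polynomial ℂ) : PowerSeries ℂ)) := by
          rw [lemB m (ζ^j)]
      _ = ((Polynomial.C (a j) *
            (Epoly m (ζ^j) * ∏ j' ∈ S.erase j,
              (1 - Polynomial.C (ζ^j') * Polynomial.X)^(m+1)) : Polynomial ℂ) : PowerSeries ℂ) := by
          rw [Polynomial.coe_mul, Polynomial.coe_mul, Polynomial.coe_C]
          ring
  -- root characterization
  have hrootden : ∀ ω : ℂ, den.IsRoot ω → ∃ j0 ∈ S, ζ^j0 * ω = 1 := by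
    intro ω hω
    rw [Polynomial.IsRoot, hden, Polynomial.eval_prod, Finset.prod_eq_zero_iff] at hω
    obtain ⟨j0, hj0, hz⟩ := hω
    refine ⟨j0, hj0, ?_⟩
    simp only [Polynomial.eval_pow, Polynomial.eval_sub, Polynomial.eval_one,
      Polynomial.eval_mul, Polynomial.eval_C, Polynomial.eval_X] at hz
    have := pow_eq_zero_iff (n := m+1) (by omega) |>.mp hz
    have h1 : ζ^j0 * ω = 1 := by
      have := sub_eq_zero.mp this
      linear_combination -this
    exact h1
  -- uniqueness of j0
  have huniq : ∀ ω : ℂ, ∀ j0 ∈ S, ζ^j0 * ω = 1 → ∀ j' ∈ S, ζ^j' * ω = 1 → j' = j0 := by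
    intro ω j0 hj0 h0 j' hj' h'
    have hωne : ω ≠ 0 := by
      intro h; rw [h, mul_zero] at h0; exact zero_ne_one h0
    have : ζ^j' = ζ^j0 := by
      have heq : ζ^j' * ω = ζ^j0 * ω := by rw [h0, h']
      exact mul_right_cancel₀ hωne heq
    exact hζ.pow_inj (Finset.mem_range.mp (Finset.mem_filter.mp hj').1)
      (Finset.mem_range.mp (Finset.mem_filter.mp hj0).1) this
  -- nonvanishing of other factors
  have hother : ∀ ω : ℂ, ∀ j0 ∈ S, ζ^j0 * ω = 1 →
      ∀ j' ∈ S.erase j0, (1 - ζ^j' * ω) ≠ 0 := by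
    intro ω j0 hj0 h0 j' hj'
    intro hz
    have h1 : ζ^j' * ω = 1 := by linear_combination -hz
    have := huniq ω j0 hj0 h0 j' (Finset.mem_of_mem_erase hj') h1
    exact (Finset.ne_of_mem_erase hj') this
  -- num does not vanish at roots of den
  have hnumne : ∀ ω : ℂ, den.IsRoot ω → ¬ num.IsRoot ω := by
    intro ω hω
    obtain ⟨j0, hj0, h0⟩ := hrootden ω hω
    rw [Polynomial.IsRoot, hnum, Polynomial.eval_finset_sum]
    have heval : ∀ j ∈ S, (Polynomial.C (a j) *
        (Epoly m (ζ^j) * ∏ j' ∈ S.erase j,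
          (1 - Polynomial.C (ζ^j') * Polynomial.X)^(m+1))).eval ω
        = a j * ((Epoly m (ζ^j)).eval ω * ∏ j' ∈ S.erase j, (1 - ζ^j' * ω)^(m+1)) := by
      intro j _
      simp only [Polynomial.eval_mul, Polynomial.eval_C, Polynomial.eval_prod,
        Polynomial.eval_pow, Polynomial.eval_sub, Polynomial.eval_one, Polynomial.eval_X]
    rw [Finset.sum_congr rfl heval]
    rw [Finset.sum_eq_single j0]
    · intro hzero
      have hepo : (Epoly m (ζ^j0)).eval ω = (m.factorial : ℂ) := Epoly_eval m _ ω h0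
      rw [hepo] at hzero
      have hprodne : ∏ j' ∈ S.erase j0, (1 - ζ^j' * ω)^(m+1) ≠ 0 := by
        apply Finset.prod_ne_zero_iff.mpr
        intro j' hj'
        exact pow_ne_zero _ (hother ω j0 hj0 h0 j' hj')
      have haj0 : a j0 ≠ 0 := (Finset.mem_filter.mp hj0).2
      have hfact : (m.factorial : ℂ) ≠ 0 := Nat.cast_ne_zero.mpr m.factorial_ne_zero
      exact (mul_ne_zero haj0 (mul_ne_zero hfact hprodne)) hzero
    · intro j hj hjne
      have hj0mem : j0 ∈ S.erase j := Finset.mem_erase.mpr ⟨fun h => hjne h.symm, hj0⟩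
      have : ∏ j' ∈ S.erase j, (1 - ζ^j' * ω)^(m+1) = 0 := by
        apply Finset.prod_eq_zero hj0mem
        rw [show (1 : ℂ) - ζ^j0 * ω = 0 by rw [h0]; ring]
        exact zero_pow (by omega)
      rw [this]
      ring
    · intro h; exact absurd hj0 h
  -- coprimality
  have hcop : IsCoprime num den := by
    rw [← EuclideanDomain.gcd_isUnit_iff]
    by_contra hunit
    set g := EuclideanDomain.gcd num den with hg
    have hgden : g ∣ den := EuclideanDomain.gcd_dvd_right num den
    have hgnum : g ∣ num := EuclideanDomain.gcd_dvd_left num den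
    have hgne : g ≠ 0 := by
      intro h
      rw [h] at hgden
      exact hdenne (zero_dvd_iff.mp hgden)
    have hdeg : 0 < g.degree := by
      by_contra hle
      push_neg at hle
      have hb : g = Polynomial.C (g.coeff 0) := Polynomial.eq_C_of_degree_le_zero hle
      apply hunit
      rw [hb]
      apply Polynomial.isUnit_C.mpr
      apply isUnit_iff_ne_zero.mpr
      intro h0
      apply hgne
      rw [hb, h0, map_zero]
    obtain ⟨ω, hω⟩ := Complex.exists_root hdeg
    have hωden : den.IsRoot ω :=
      Polynomial.eval_eq_zero_of_dvd_of_eval_eq_zero hgden hω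
    have hωnum : num.IsRoot ω :=
      Polynomial.eval_eq_zero_of_dvd_of_eval_eq_zero hgnum hω
    exact hnumne ω hωden hωnum
  refine ⟨num, den, hcop, hdenne, hmain, ?_⟩
  -- roots of den
  intro ω hω
  obtain ⟨j0, hj0, h0⟩ := hrootden ω hω
  have hωpow : ω ^ n = 1 := by
    have hu : (ζ^j0)^n = 1 := by rw [← pow_mul, mul_comm, pow_mul, hζn, one_pow]
    have hωeq : ω = (ζ^j0)⁻¹ := eq_inv_of_mul_eq_one_right h0
    rw [hωeq, inv_pow, hu, inv_one]
  constructor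
  · exact hωpow
  · -- root multiplicity
    have hsplit : den = (1 - Polynomial.C (ζ^j0) * Polynomial.X)^(m+1)
        * ∏ j' ∈ S.erase j0, (1 - Polynomial.C (ζ^j') * Polynomial.X)^(m+1) := by
      rw [hden]
      exact (Finset.mul_prod_erase S
        (fun j => (1 - Polynomial.C (ζ^j) * Polynomial.X)^(m+1)) hj0).symm
    have hRne : (∏ j' ∈ S.erase j0,
        (1 - Polynomial.C (ζ^j') * Polynomial.X)^(m+1)).eval ω ≠ 0 := by
      rw [Polynomial.eval_prod]
      apply Finset.prod_ne_zero_iff.mpr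
      intro j' hj'
      simp only [Polynomial.eval_pow, Polynomial.eval_sub, Polynomial.eval_one,
        Polynomial.eval_mul, Polynomial.eval_C, Polynomial.eval_X]
      exact pow_ne_zero _ (hother ω j0 hj0 h0 j' hj')
    have hfac : (1 - Polynomial.C (ζ^j0) * Polynomial.X : Polynomial ℂ)
        = Polynomial.C (-(ζ^j0)) * (Polynomial.X - Polynomial.C ω) := by
      have h1 : Polynomial.C (ζ^j0) * Polynomial.C ω = 1 := by
        rw [← Polynomial.C_mul, h0, map_one]
      rw [map_neg]
      linear_combination -h1
    have hmulne : den ≠ 0 := hdenne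
    have huj0ne : ζ^j0 ≠ 0 := pow_ne_zero _ hζne
    rw [hsplit, Polynomial.rootMultiplicity_mul (by rw [← hsplit]; exact hmulne)]
    have h2 : Polynomial.rootMultiplicity ω
        ((1 - Polynomial.C (ζ^j0) * Polynomial.X)^(m+1) : Polynomial ℂ) = m + 1 := by
      have hCne : (Polynomial.C (-(ζ^j0)) : Polynomial ℂ) ≠ 0 :=
        Polynomial.C_ne_zero.mpr (neg_ne_zero.mpr huj0ne)
      rw [hfac, mul_pow, Polynomial.rootMultiplicity_mul
        (mul_ne_zero (pow_ne_zero _ hCne)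
          (pow_ne_zero _ (Polynomial.X_sub_C_ne_zero ω)))]
      rw [Polynomial.rootMultiplicity_X_sub_C_pow]
      have hc0 : Polynomial.rootMultiplicity ω
          ((Polynomial.C (-(ζ^j0)))^(m+1) : Polynomial ℂ) = 0 := by
        apply Polynomial.rootMultiplicity_eq_zero
        simp only [Polynomial.IsRoot, Polynomial.eval_pow, Polynomial.eval_C]
        exact pow_ne_zero _ (neg_ne_zero.mpr huj0ne)
      rw [hc0, zero_add]
    have h3 : Polynomial.rootMultiplicity ω
        (∏ j' ∈ S.erase j0, (1 - Polynomial.C (ζ^j') * Polynomial.X)^(m+1)) = 0 :=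
      Polynomial.rootMultiplicity_eq_zero hRne
    rw [h2, h3]
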